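/- Let A be the 2×2 matrix with entries a₁₁ = 1 − μ²/(2L²), a₁₂ = μ²c₂/L⁴, a₂₁ = c₃μ²/L², a₂₂ = c_x + c₄μ²/L⁴, where 0 < μ < L, c₂, c₃, c₄ > 0, and 0 < c_x < 1. Suppose μ² ≤ (1 − c_x)/m₁ where m₁ = 4c₂c₃/L⁴ + 1/(4L²) + c₄/L⁴. Then the vector ε = [4c₂/L², 1]ᵀ satisfies Aε ≤ (1 − μ²/(4L²))·ε componentwise, and hence ρ(A) ≤ 1 − μ²/(4L²) < 1. -/
import Mathlib

open Matrix Module.End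

lemma spec_bound (A : Matrix (Fin 2) (Fin 2) ℝ) (hA : ∀ i j, 0 ≤ A i j)
    (ε : Fin 2 → ℝ) (hε : ∀ i, 0 < ε i) (r : ℝ)
    (h : ∀ i, A.mulVec ε i ≤ r * ε i) :
    ∀ z ∈ spectrum ℂ (A.map (Complex.ofReal ·)), ‖z‖ ≤ r := by
  intro z hz
  set M := A.map (Complex.ofReal ·) with hM
  rw [← AlgEquiv.spectrum_eq (Matrix.toLinAlgEquiv' (R := ℂ) (n := Fin 2)),
    ← hasEigenvalue_iff_mem_spectrum] at hz
  obtain ⟨v, hv⟩ := hz.exists_hasEigenvector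
  have hvne := hv.2
  have hmv : M.mulVec v = z • v := by
    have := hv.apply_eq_smul
    rwa [Matrix.toLinAlgEquiv'_apply] at this
  set w : Fin 2 → ℝ := fun i => ‖v i‖ / ε i with hw
  obtain ⟨i, -, hi⟩ := Finset.exists_max_image (Finset.univ : Finset (Fin 2)) w ⟨0, Finset.mem_univ 0⟩
  have hwi : 0 < w i := by
    obtain ⟨j, hj⟩ := Function.ne_iff.mp hvne
    have : 0 < w j := div_pos (by simpa using hj) (hε j)
    exact lt_of_lt_of_le this (hi j (Finset.mem_univ j))
  have hvj : ∀ j, ‖v j‖ ≤ w i * ε j := by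
    intro j
    have := hi j (Finset.mem_univ j)
    calc ‖v j‖ = w j * ε j := (div_mul_cancel₀ _ (hε j).ne').symm
    _ ≤ w i * ε j := by nlinarith [hε j]
  have hvi : ‖v i‖ = w i * ε i := (div_mul_cancel₀ _ (hε i).ne').symm
  have key : ‖z‖ * (w i * ε i) ≤ r * (w i * ε i) := by
    have h1 : ‖z‖ * ‖v i‖ = ‖M.mulVec v i‖ := by
      rw [hmv]; simp [norm_smul]
    have h2 : ‖M.mulVec v i‖ ≤ A i 0 * ‖v 0‖ + A i 1 * ‖v 1‖ := by
      have : M.mulVec v i = M i 0 * v 0 + M i 1 * v 1 := by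
        simp [Matrix.mulVec, dotProduct, Fin.sum_univ_two]
      rw [this]
      refine le_trans (norm_add_le _ _) ?_
      simp only [norm_mul, hM, Matrix.map_apply, Complex.norm_real]
      gcongr <;> simp [abs_of_nonneg (hA i _)]
    have h3 : A i 0 * ‖v 0‖ + A i 1 * ‖v 1‖ ≤ w i * (A.mulVec ε i) := by
      have e : A.mulVec ε i = A i 0 * ε 0 + A i 1 * ε 1 := by
        simp [Matrix.mulVec, dotProduct, Fin.sum_univ_two]
      rw [e]
      nlinarith [hvj 0, hvj 1, hA i 0, hA i 1]
    have h4 : w i * (A.mulVec ε i) ≤ w i * (r * ε i) := by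
      nlinarith [h i]
    calc ‖z‖ * (w i * ε i) = ‖z‖ * ‖v i‖ := by rw [hvi]
    _ = ‖M.mulVec v i‖ := h1
    _ ≤ A i 0 * ‖v 0‖ + A i 1 * ‖v 1‖ := h2
    _ ≤ w i * (A.mulVec ε i) := h3
    _ ≤ w i * (r * ε i) := h4
    _ = r * (w i * ε i) := by ring
  have hpos : 0 < w i * ε i := mul_pos hwi (hε i)
  exact le_of_mul_le_mul_right (by linarith) hpos
theorem stmt19 (L μ c₂ c₃ c₄ cx : ℝ) (hμ : 0 < μ) (hL : μ < L)
    (hc₂ : 0 < c₂) (hc₃ : 0 < c₃) (hc₄ : 0 < c₄) (hcx0 : 0 < cx) (hcx1 : cx < 1)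
    (A : Matrix (Fin 2) (Fin 2) ℝ)
    (hA : A = Matrix.of ![![1 - μ ^ 2 / (2 * L ^ 2), μ ^ 2 * c₂ / L ^ 4],
                          ![c₃ * μ ^ 2 / L ^ 2, cx + c₄ * μ ^ 2 / L ^ 4]])
    (hμ2 : μ ^ 2 ≤ (1 - cx) / (4 * c₂ * c₃ / L ^ 4 + 1 / (4 * L ^ 2) + c₄ / L ^ 4)) :
    (∀ i, A.mulVec ![4 * c₂ / L ^ 2, 1] i ≤ (1 - μ ^ 2 / (4 * L ^ 2)) * ![4 * c₂ / L ^ 2, 1] i) ∧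
      (∀ z ∈ spectrum ℂ (A.map (Complex.ofReal ·)), ‖z‖ ≤ 1 - μ ^ 2 / (4 * L ^ 2)) ∧
      1 - μ ^ 2 / (4 * L ^ 2) < 1 := by
  have hL0 : 0 < L := hμ.trans hL
  have hμL : μ ^ 2 < L ^ 2 := by nlinarith
  have hm : 0 < 4 * c₂ * c₃ / L ^ 4 + 1 / (4 * L ^ 2) + c₄ / L ^ 4 := by positivity
  have hμ2' : μ ^ 2 * (4 * c₂ * c₃ / L ^ 4 + 1 / (4 * L ^ 2) + c₄ / L ^ 4) ≤ 1 - cx :=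
    (le_div_iff₀ hm).mp hμ2
  have part1 : ∀ i, A.mulVec ![4 * c₂ / L ^ 2, 1] i ≤
      (1 - μ ^ 2 / (4 * L ^ 2)) * ![4 * c₂ / L ^ 2, 1] i := by
    intro i
    fin_cases i
    · show A.mulVec ![4 * c₂ / L ^ 2, 1] 0 ≤ (1 - μ ^ 2 / (4 * L ^ 2)) * (4 * c₂ / L ^ 2)
      have : A.mulVec ![4 * c₂ / L ^ 2, 1] 0 =
          (1 - μ ^ 2 / (2 * L ^ 2)) * (4 * c₂ / L ^ 2) + μ ^ 2 * c₂ / L ^ 4 * 1 := by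
        subst hA; simp [Matrix.mulVec, dotProduct, Fin.sum_univ_two]
      rw [this]
      have : (1 - μ ^ 2 / (2 * L ^ 2)) * (4 * c₂ / L ^ 2) + μ ^ 2 * c₂ / L ^ 4 * 1 =
          (1 - μ ^ 2 / (4 * L ^ 2)) * (4 * c₂ / L ^ 2) := by
        field_simp; ring
      rw [this]
    · show A.mulVec ![4 * c₂ / L ^ 2, 1] 1 ≤ (1 - μ ^ 2 / (4 * L ^ 2)) * 1
      have h1 : A.mulVec ![4 * c₂ / L ^ 2, 1] 1 =
          c₃ * μ ^ 2 / L ^ 2 * (4 * c₂ / L ^ 2) + (cx + c₄ * μ ^ 2 / L ^ 4) := by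
        subst hA; simp [Matrix.mulVec, dotProduct, Fin.sum_univ_two]
      have h2 : c₃ * μ ^ 2 / L ^ 2 * (4 * c₂ / L ^ 2) + c₄ * μ ^ 2 / L ^ 4 + μ ^ 2 / (4 * L ^ 2)
          = μ ^ 2 * (4 * c₂ * c₃ / L ^ 4 + 1 / (4 * L ^ 2) + c₄ / L ^ 4) := by
        field_simp; ring
      rw [h1]
      linarith
  refine ⟨part1, ?_, ?_⟩
  · refine spec_bound A ?_ ![4 * c₂ / L ^ 2, 1] ?_ _ part1
    · intro i j
      subst hA
      fin_cases i <;> fin_cases j <;> simp <;> first | positivity | (rw [div_le_one (by positivity)]; nlinarith)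
    · intro i
      fin_cases i
      · show (0:ℝ) < 4 * c₂ / L ^ 2; positivity
      · show (0:ℝ) < 1; norm_num
  · have : 0 < μ ^ 2 / (4 * L ^ 2) := by positivity
    linarith
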